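/- arXiv:2008.01413 — 4 statements merged into one kernel-verified Lean document; each statement's English description precedes it below -/
import Mathlib

section
/- The language L(a,b) = {w ∈ {a,b}* : |w|_a = |w|_b} is REG-measurable with measure 0: for every ε > 0 there exist regular languages K, M with K ⊆ L(a,b) ⊆ M, δ_A(K) ≥ 0, and δ_A(M) ≤ ε. Equivalently, the regular upper density of L(a,b) equals 0. -/
open Filter Topology

/-- Number of words of `L` of length `n`. -/
noncomputable def wordCount {A : Type*} (L : Set (List A)) (n : ℕ) : ℕ :=
  Nat.card {w : List A // w ∈ L ∧ w.length = n}

/-- `L` has natural density `α`. -/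
def HasNatDensity {A : Type*} [Fintype A] (L : Set (List A)) (α : ℝ) : Prop :=
  Tendsto (fun n : ℕ => (wordCount L n : ℝ) / (Fintype.card A : ℝ) ^ n) atTop (nhds α)

/-- `L` has (Cesàro) density `α`. -/
def HasCesaroDensity {A : Type*} [Fintype A] (L : Set (List A)) (α : ℝ) : Prop :=
  Tendsto (fun n : ℕ =>
      (∑ k ∈ Finset.range n, (wordCount L k : ℝ) / (Fintype.card A : ℝ) ^ k) / n)
    atTop (nhds α)

/-- `L` is a regular language (accepted by a DFA with finitely many states). -/
def IsRegularLang {A : Type*} (L : Set (List A)) : Prop :=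
  ∃ (σ : Type) (_ : Fintype σ) (M : DFA A σ), ∀ w, w ∈ M.accepts ↔ w ∈ L

section Aux

variable {A : Type*} [Fintype A] [DecidableEq A]

/-- difference of counts mod m -/
def diffC (a b : A) (m : ℕ) (w : List A) : ZMod m :=
  (w.count a : ZMod m) - (w.count b : ZMod m)

lemma finite_words (p : List A → Prop) (n : ℕ) :
    Finite {w : List A // p w ∧ w.length = n} := by
  haveI : Finite {l : List A // l.length = n} :=
    (inferInstance : Finite (List.Vector A n))
  apply Finite.of_injective
    (fun x : {w : List A // p w ∧ w.length = n} =>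
      (⟨x.1, x.2.2⟩ : {l : List A // l.length = n}))
  intro x y h
  exact Subtype.ext (congrArg Subtype.val h :)

lemma diffC_cons (a b : A) (hab : a ≠ b) (m : ℕ) (c : A) (w : List A) :
    diffC a b m (c :: w) =
      diffC a b m w + (if c = a then 1 else if c = b then -1 else 0) := by
  unfold diffC
  rcases eq_or_ne c a with rfl | hca
  · simp [List.count_cons, hab.symm]
    push_cast
    rw [if_neg hab]
    ring
  · rcases eq_or_ne c b with rfl | hcb
    · simp [List.count_cons, hca]
      push_cast
      ring
    · simp [List.count_cons, hca, hcb, Ne.symm hca, Ne.symm hcb]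

lemma wordCount_diffC_zero (a b : A) (m : ℕ) (r : ZMod m) :
    wordCount {w : List A | diffC a b m w = r} 0 = if r = 0 then 1 else 0 := by
  unfold wordCount
  rcases eq_or_ne r 0 with rfl | hr
  · rw [if_pos rfl]
    have : Unique {w : List A // w ∈ {w : List A | diffC a b m w = 0} ∧ w.length = 0} := by
      refine ⟨⟨⟨[], by simp [diffC], rfl⟩⟩, ?_⟩
      rintro ⟨w, h1, h2⟩
      apply Subtype.ext
      exact List.length_eq_zero_iff.mp h2
    exact Nat.card_unique
  · rw [if_neg hr]
    have : IsEmpty {w : List A // w ∈ {w : List A | diffC a b m w = r} ∧ w.length = 0} := by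
      refine ⟨?_⟩
      rintro ⟨w, h1, h2⟩
      rw [List.length_eq_zero_iff.mp h2] at h1
      simp [diffC] at h1
      exact hr h1.symm
    exact Nat.card_of_isEmpty

lemma wordCount_diffC_succ (a b : A) (hab : a ≠ b) (hall : ∀ c : A, c = a ∨ c = b)
    (m : ℕ) (n : ℕ) (r : ZMod m) :
    wordCount {w : List A | diffC a b m w = r} (n + 1) =
      wordCount {w : List A | diffC a b m w = r - 1} n +
      wordCount {w : List A | diffC a b m w = r + 1} n := by
  classical
  unfold wordCount
  haveI := finite_words (A := A) (· ∈ {w : List A | diffC a b m w = r}) (n+1)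
  haveI := finite_words (A := A) (· ∈ {w : List A | diffC a b m w = r - 1}) n
  haveI := finite_words (A := A) (· ∈ {w : List A | diffC a b m w = r + 1}) n
  rw [← Nat.card_sum]
  apply Nat.card_congr
  refine Equiv.symm (Equiv.ofBijective (fun x => Sum.elim
    (fun (t : {w : List A // w ∈ {w : List A | diffC a b m w = r - 1} ∧ w.length = n}) =>
      (⟨a :: t.1, by
        have := t.2.1
        simp only [Set.mem_setOf_eq] at this ⊢
        rw [diffC_cons a b hab m a t.1, this, if_pos rfl]
        ring, by simp [t.2.2]⟩ :
        {w : List A // w ∈ {w : List A | diffC a b m w = r} ∧ w.length = n + 1}))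
    (fun (t : {w : List A // w ∈ {w : List A | diffC a b m w = r + 1} ∧ w.length = n}) =>
      (⟨b :: t.1, by
        have := t.2.1
        simp only [Set.mem_setOf_eq] at this ⊢
        rw [diffC_cons a b hab m b t.1, this, if_neg (Ne.symm hab), if_pos rfl]
        ring, by simp [t.2.2]⟩ :
        {w : List A // w ∈ {w : List A | diffC a b m w = r} ∧ w.length = n + 1})) x) ?_)
  constructor
  · rintro (⟨x, hx⟩ | ⟨x, hx⟩) (⟨y, hy⟩ | ⟨y, hy⟩) h <;>
      simp only [Sum.elim_inl, Sum.elim_inr, Subtype.mk.injEq, List.cons.injEq] at h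
    · exact congrArg Sum.inl (Subtype.ext h.2)
    · exact absurd h.1 hab
    · exact absurd h.1.symm hab
    · exact congrArg Sum.inr (Subtype.ext h.2)
  · rintro ⟨w, hw, hlen⟩
    match w, hlen with
    | c :: t, hlen =>
      simp only [Set.mem_setOf_eq] at hw
      rw [diffC_cons a b hab m c t] at hw
      rcases hall c with rfl | rfl
    
      · refine ⟨Sum.inl ⟨t, ?_, by simpa using hlen⟩, ?_⟩
        · rw [if_pos rfl] at hw
          simp only [Set.mem_setOf_eq]
          rw [← hw]; ring
        · simp
      · refine ⟨Sum.inr ⟨t, ?_, by simpa using hlen⟩, ?_⟩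
        · rw [if_neg (Ne.symm hab), if_pos rfl] at hw
          simp only [Set.mem_setOf_eq]
          rw [← hw]; ring
        · simp

end Aux

section Fourier

variable {A : Type*} [Fintype A] [DecidableEq A]

lemma pow_mod_eq {ζ : ℂ} {m : ℕ} (h1 : ζ ^ m = 1) (x : ℕ) : ζ ^ x = ζ ^ (x % m) := by
  conv_lhs => rw [← Nat.div_add_mod x m]
  rw [pow_add, pow_mul, h1, one_pow, one_mul]

lemma pow_modEq {ζ : ℂ} {m : ℕ} (h1 : ζ ^ m = 1) {x y : ℕ} (h : x ≡ y [MOD m]) :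
    ζ ^ x = ζ ^ y := by
  rw [pow_mod_eq h1 x, pow_mod_eq h1 y, (h : x % m = y % m)]

lemma val_add_one_modEq (m : ℕ) [NeZero m] (r : ZMod m) :
    (r + 1).val ≡ r.val + 1 [MOD m] := by
  rw [← ZMod.natCast_eq_natCast_iff]
  push_cast [ZMod.natCast_val, ZMod.cast_id]
  ring

lemma val_sub_one_modEq (m : ℕ) [NeZero m] (r : ZMod m) :
    (r - 1).val ≡ r.val + (m - 1) [MOD m] := by
  have hm : 1 ≤ m := Nat.one_le_iff_ne_zero.mpr (NeZero.ne m)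
  rw [← ZMod.natCast_eq_natCast_iff]
  push_cast [ZMod.natCast_val, ZMod.cast_id, Nat.cast_sub hm, ZMod.natCast_self]
  ring

lemma sum_val_range (m : ℕ) [NeZero m] (f : ℕ → ℂ) :
    ∑ j : ZMod m, f (ZMod.val j) = ∑ i ∈ Finset.range m, f i := by
  refine Finset.sum_nbij' (fun j => ZMod.val j) (fun i => (i : ZMod m)) ?_ ?_ ?_ ?_ ?_
  · intro j _; exact Finset.mem_range.mpr (ZMod.val_lt j)
  · intro i _; exact Finset.mem_univ _
  · intro j _; exact ZMod.natCast_rightInverse j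
  · intro i hi; exact ZMod.val_cast_of_lt (Finset.mem_range.mp hi)
  · intro j _; rfl

end Fourier
section MainCount

variable {A : Type*} [Fintype A] [DecidableEq A]

lemma main_count (a b : A) (hab : a ≠ b) (hall : ∀ c : A, c = a ∨ c = b)
    (m : ℕ) [NeZero m] (hm : 2 ≤ m) (n : ℕ) :
    (wordCount {w : List A | diffC a b m w = 0} n : ℝ) * m =
      ∑ j : ZMod m, (2 * Real.cos (2 * Real.pi * (ZMod.val j) / m)) ^ n := by
  set ζ : ℂ := Complex.exp (2 * Real.pi * Complex.I / m) with hζdef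
  have hζ : IsPrimitiveRoot ζ m := Complex.isPrimitiveRoot_exp m (by omega)
  have hζ1 : ζ ^ m = 1 := hζ.pow_eq_one
  set cnt : ℕ → ZMod m → ℕ := fun n r => wordCount {w : List A | diffC a b m w = r} n
    with hcnt
  set S : ZMod m → ℕ → ℂ := fun j n => ∑ r : ZMod m, (cnt n r : ℂ) * ζ ^ (j.val * r.val)
    with hS
  -- base case
  have hS0 : ∀ j, S j 0 = 1 := by
    intro j
    rw [hS]
    simp only
    rw [Finset.sum_eq_single 0]
    · simp [hcnt, wordCount_diffC_zero a b m]
    · intro r _ hr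
      simp [hcnt, wordCount_diffC_zero a b m, hr]
    · simp
  -- recurrence
  have hSrec : ∀ j n, S j (n + 1) = (ζ ^ j.val + ζ ^ (j.val * (m - 1))) * S j n := by
    intro j n
    have step1 : S j (n + 1) =
        (∑ r : ZMod m, (cnt n (r - 1) : ℂ) * ζ ^ (j.val * r.val)) +
        (∑ r : ZMod m, (cnt n (r + 1) : ℂ) * ζ ^ (j.val * r.val)) := by
      rw [hS]
      simp only
      rw [← Finset.sum_add_distrib]
      apply Finset.sum_congr rfl
      intro r _
      rw [hcnt]
      simp only
      rw [wordCount_diffC_succ a b hab hall m n r]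
      push_cast
      ring
    have e1 : (∑ r : ZMod m, (cnt n (r - 1) : ℂ) * ζ ^ (j.val * r.val)) =
        ∑ s : ZMod m, (cnt n s : ℂ) * ζ ^ (j.val * s.val) * ζ ^ j.val := by
      rw [← Fintype.sum_equiv (Equiv.addRight (1 : ZMod m))
        (fun s => (cnt n s : ℂ) * ζ ^ (j.val * s.val) * ζ ^ j.val)
        (fun r => (cnt n (r - 1) : ℂ) * ζ ^ (j.val * r.val)) ?_]
      intro s
      simp only [Equiv.coe_addRight, add_sub_cancel_right]
      rw [show ζ ^ (j.val * (s + 1).val) = ζ ^ (j.val * s.val) * ζ ^ j.val from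
        pow_modEq hζ1 (((val_add_one_modEq m s).mul_left j.val).trans
          (by rw [Nat.mul_add, Nat.mul_one])) ▸ (pow_add ζ _ _)]
      ring
    have e2 : (∑ r : ZMod m, (cnt n (r + 1) : ℂ) * ζ ^ (j.val * r.val)) =
        ∑ s : ZMod m, (cnt n s : ℂ) * ζ ^ (j.val * s.val) * ζ ^ (j.val * (m - 1)) := by
      rw [← Fintype.sum_equiv (Equiv.subRight (1 : ZMod m))
        (fun s => (cnt n s : ℂ) * ζ ^ (j.val * s.val) * ζ ^ (j.val * (m - 1)))
        (fun r => (cnt n (r + 1) : ℂ) * ζ ^ (j.val * r.val)) ?_]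
      intro s
      simp only [Equiv.subRight_apply, sub_add_cancel]
      rw [show ζ ^ (j.val * (s - 1).val) = ζ ^ (j.val * s.val) * ζ ^ (j.val * (m - 1)) from by
        rw [← pow_add]
        exact pow_modEq hζ1 (((val_sub_one_modEq m s).mul_left j.val).trans
          (by rw [Nat.mul_add]))]
      ring
    rw [step1, e1, e2, ← Finset.sum_add_distrib, hS]
    simp only
    rw [Finset.mul_sum]
    apply Finset.sum_congr rfl
    intro r _
    ring
  -- closed form
  have hSn : ∀ j n, S j n = (ζ ^ j.val + ζ ^ (j.val * (m - 1))) ^ n := by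
    intro j n
    induction n with
    | zero => simpa using hS0 j
    | succ k ih => rw [hSrec j k, ih, pow_succ]; ring
  -- inversion
  have hinv : ∀ n, ∑ j : ZMod m, S j n = (m : ℂ) * (cnt n 0 : ℂ) := by
    intro n
    rw [hS]
    simp only
    rw [Finset.sum_comm]
    have : ∀ r : ZMod m, ∑ j : ZMod m, (cnt n r : ℂ) * ζ ^ (j.val * r.val) =
        (cnt n r : ℂ) * (if r = 0 then (m : ℂ) else 0) := by
      intro r
      rw [← Finset.mul_sum]
      congr 1
      have hrw : ∀ j : ZMod m, ζ ^ (j.val * r.val) = (ζ ^ r.val) ^ j.val := by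
        intro j
        rw [← pow_mul, Nat.mul_comm]
      simp_rw [hrw]
      rw [sum_val_range m (fun i => (ζ ^ r.val) ^ i)]
      rcases eq_or_ne r 0 with rfl | hr
      · simp
      · rw [if_neg hr]
        have hx1 : ζ ^ r.val ≠ 1 :=
          hζ.pow_ne_one_of_pos_of_lt (fun (h : r.val = 0) => hr (by
            rw [← ZMod.natCast_rightInverse r, h, Nat.cast_zero])) (ZMod.val_lt r)
        have hxm : (ζ ^ r.val) ^ m = 1 := by
          rw [← pow_mul, Nat.mul_comm, pow_mul, hζ1, one_pow]
        rw [geom_sum_eq hx1, hxm, sub_self, zero_div]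
    simp_rw [this]
    rw [Finset.sum_eq_single (0 : ZMod m)]
    · rw [if_pos rfl]; ring
    · intro r _ hr; rw [if_neg hr, mul_zero]
    · intro h; exact absurd (Finset.mem_univ _) h
  -- closed form for the count
  have key : (m : ℂ) * (cnt n 0 : ℂ) =
      ∑ j : ZMod m, (ζ ^ j.val + ζ ^ (j.val * (m - 1))) ^ n := by
    rw [← hinv n]
    exact Finset.sum_congr rfl fun j _ => hSn j n
  have hterm : ∀ j : ZMod m, ζ ^ j.val + ζ ^ (j.val * (m - 1)) =
      ((2 * Real.cos (2 * Real.pi * (ZMod.val j) / m) : ℝ) : ℂ) := by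
    intro j
    have hx : ζ ^ j.val =
        Complex.exp (((2 * Real.pi * (ZMod.val j) / m : ℝ) : ℂ) * Complex.I) := by
      rw [hζdef, ← Complex.exp_nat_mul]
      congr 1
      push_cast
      ring
    have hprod : ζ ^ (j.val * (m - 1)) * ζ ^ j.val = 1 := by
      rw [← pow_add]
      have h2 : j.val * (m - 1) + j.val = j.val * m := by
        have h1 : m - 1 + 1 = m := by omega
        calc j.val * (m - 1) + j.val = j.val * ((m - 1) + 1) := by rw [Nat.mul_succ]
          _ = j.val * m := by rw [h1]
      rw [h2, Nat.mul_comm, pow_mul, hζ1, one_pow]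
    have hxinv : ζ ^ (j.val * (m - 1)) =
        Complex.exp (-(((2 * Real.pi * (ZMod.val j) / m : ℝ) : ℂ)) * Complex.I) := by
      rw [neg_mul, Complex.exp_neg, ← hx]
      exact eq_inv_of_mul_eq_one_left hprod
    rw [hx, hxinv, ← Complex.two_cos]
    push_cast [Complex.ofReal_cos]
    ring
  have key2 : (m : ℂ) * (cnt n 0 : ℂ) =
      (((∑ j : ZMod m, (2 * Real.cos (2 * Real.pi * (ZMod.val j) / m)) ^ n : ℝ)) : ℂ) := by
    rw [key, Complex.ofReal_sum]
    refine Finset.sum_congr rfl fun j _ => ?_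
    rw [Complex.ofReal_pow, ← hterm j]
  apply Complex.ofReal_injective
  rw [Complex.ofReal_mul, ← key2]
  push_cast
  ring

end MainCount

section Limits

variable {A : Type*} [Fintype A] [DecidableEq A]

lemma abs_cos_lt_one (m : ℕ) (hodd : Odd m) (hm : 2 ≤ m) (v : ℕ)
    (h0 : 0 < v) (hv : v < m) : |Real.cos (2 * Real.pi * v / m)| < 1 := by
  have hmpos : (0 : ℝ) < m := by positivity
  set θ : ℝ := 2 * Real.pi * v / m with hθ
  have hsin : Real.sin θ ≠ 0 := by
    intro hs
    rcases Real.sin_eq_zero_iff.mp hs with ⟨k, hk⟩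
    have hπ : Real.pi ≠ 0 := Real.pi_ne_zero
    have h2 : (k : ℝ) * Real.pi * m = 2 * Real.pi * v := by
      rw [hk, hθ]
      field_simp
    have h3 : Real.pi * ((k : ℝ) * m) = Real.pi * (2 * v) := by ring_nf; ring_nf at h2; linarith
    have h4 : (k : ℝ) * m = 2 * v := mul_left_cancel₀ hπ h3
    have h5 : k * (m : ℤ) = 2 * v := by exact_mod_cast h4
    have hkpos : 0 < k := by
      by_contra hkn
      push_neg at hkn
      have : k * (m : ℤ) ≤ 0 := mul_nonpos_of_nonpos_of_nonneg hkn (by positivity)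
      omega
    have hk2 : k < 2 := by
      by_contra hk2
      push_neg at hk2
      have : 2 * (m : ℤ) ≤ k * m := by
        apply mul_le_mul_of_nonneg_right hk2 (by positivity)
      omega
    have hk1 : k = 1 := by omega
    rw [hk1, one_mul] at h5
    have : m = 2 * v := by exact_mod_cast h5
    rcases hodd with ⟨t, ht⟩
    omega
  have hcos2 : Real.cos θ ^ 2 < 1 := by
    have hid := Real.sin_sq_add_cos_sq θ
    have : 0 < Real.sin θ ^ 2 := by positivity
    nlinarith
  exact (sq_lt_one_iff_abs_lt_one _).mp hcos2

lemma tendsto_density (a b : A) (hab : a ≠ b) (hall : ∀ c : A, c = a ∨ c = b)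
    (m : ℕ) [NeZero m] (hodd : Odd m) (hm : 2 ≤ m) :
    Tendsto (fun n => (wordCount {w : List A | diffC a b m w = 0} n : ℝ) / 2 ^ n)
      atTop (𝓝 (1 / m)) := by
  have hm0 : (0 : ℝ) < m := by
    have := NeZero.ne m
    positivity
  have heq : ∀ n : ℕ, (wordCount {w : List A | diffC a b m w = 0} n : ℝ) / 2 ^ n =
      (∑ j : ZMod m, (Real.cos (2 * Real.pi * (ZMod.val j) / m)) ^ n) / m := by
    intro n
    have h := main_count a b hab hall m hm n
    have h2 : (wordCount {w : List A | diffC a b m w = 0} n : ℝ) * m =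
        2 ^ n * ∑ j : ZMod m, (Real.cos (2 * Real.pi * (ZMod.val j) / m)) ^ n := by
      rw [h, Finset.mul_sum]
      exact Finset.sum_congr rfl fun j _ => by rw [mul_pow]
    rw [div_eq_div_iff (by positivity) hm0.ne']
    linarith [h2]
  apply Tendsto.congr (fun n => (heq n).symm)
  have hsum : Tendsto (fun n => ∑ j : ZMod m, (Real.cos (2 * Real.pi * (ZMod.val j) / m)) ^ n)
      atTop (𝓝 1) := by
    have h1 : (∑ j : ZMod m, (if j = 0 then (1 : ℝ) else 0)) = 1 := by simp
    rw [← h1]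
    apply tendsto_finset_sum
    intro j _
    rcases eq_or_ne j 0 with rfl | hj
    · rw [if_pos rfl]
      have : ∀ n : ℕ, (Real.cos (2 * Real.pi * (ZMod.val (0 : ZMod m)) / m)) ^ n = 1 := by
        intro n
        rw [ZMod.val_zero]
        push_cast
        rw [mul_zero, zero_div, Real.cos_zero, one_pow]
      rw [funext this]
      exact tendsto_const_nhds
    · rw [if_neg hj]
      exact tendsto_pow_atTop_nhds_zero_iff.mpr
        (abs_cos_lt_one m hodd hm (ZMod.val j) (ZMod.val_pos.mpr hj) (ZMod.val_lt j))
  simpa using hsum.div_const (m : ℝ)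

end Limits

section Final

variable {A : Type*} [Fintype A] [DecidableEq A]

lemma all_letters (a b : A) (hab : a ≠ b) (hcard : Fintype.card A = 2) :
    ∀ c : A, c = a ∨ c = b := by
  intro c
  by_contra h
  push_neg at h
  have h3 : ({a, b, c} : Finset A).card = 3 := by
    rw [Finset.card_insert_of_notMem (by simp [hab, Ne.symm h.1]),
      Finset.card_insert_of_notMem (by simp [Ne.symm h.2]), Finset.card_singleton]
  have := Finset.card_le_univ ({a, b, c} : Finset A)
  rw [h3] at this
  rw [hcard] at this
  omega

def diffDFA (a : A) (m : ℕ) : DFA A (ZMod m) :=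
  ⟨fun s c => if c = a then s + 1 else s - 1, 0, {0}⟩

lemma diffDFA_evalFrom (a b : A) (hab : a ≠ b) (hall : ∀ c : A, c = a ∨ c = b)
    (m : ℕ) : ∀ (w : List A) (s : ZMod m),
      (diffDFA a m).evalFrom s w = s + diffC a b m w := by
  intro w
  induction w with
  | nil => intro s; simp [diffC, DFA.evalFrom]
  | cons c t ih =>
    intro s
    have hstep : (diffDFA a m).evalFrom s (c :: t) =
        (diffDFA a m).evalFrom ((diffDFA a m).step s c) t := rfl
    rw [hstep, ih, diffC_cons a b hab m c t]
    rcases hall c with rfl | rfl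
    · simp [diffDFA]
      ring
    · simp [diffDFA, Ne.symm hab]
      ring

end Final

/-- The language `{w : |w|_a = |w|_b}` is `REG`-measurable with measure `0`:
it has regular subsets of density `0` and regular supersets of arbitrarily
small density. -/
theorem stmt10 {A : Type*} [Fintype A] [DecidableEq A] (a b : A) (hab : a ≠ b)
    (hcard : Fintype.card A = 2) :
    ∀ ε : ℝ, 0 < ε →
      (∃ K : Set (List A), IsRegularLang K ∧ K ⊆ {w | w.count a = w.count b} ∧
        ∃ α : ℝ, HasCesaroDensity K α ∧ 0 ≤ α) ∧
      (∃ M : Set (List A), IsRegularLang M ∧ {w : List A | w.count a = w.count b} ⊆ M ∧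
        ∃ β : ℝ, HasCesaroDensity M β ∧ β ≤ ε) := by

  intro ε hε
  have hall := all_letters a b hab hcard
  constructor
  · refine ⟨∅, ?_, Set.empty_subset _, 0, ?_, le_refl 0⟩
    · refine ⟨Unit, inferInstance, ⟨fun _ _ => (), (), ∅⟩, fun w => ?_⟩
      simp [DFA.mem_accepts]
    · have hwc : ∀ k : ℕ, wordCount (∅ : Set (List A)) k = 0 := by
        intro k
        haveI : IsEmpty {w : List A // w ∈ (∅ : Set (List A)) ∧ w.length = k} :=
          ⟨fun x => x.2.1⟩
        exact Nat.card_of_isEmpty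
      unfold HasCesaroDensity
      have hz : ∀ n : ℕ,
          ((∑ k ∈ Finset.range n,
            (wordCount (∅ : Set (List A)) k : ℝ) / (Fintype.card A : ℝ) ^ k) / n) = 0 := by
        intro n
        simp [hwc]
      exact Tendsto.congr (fun n => (hz n).symm) tendsto_const_nhds
  · obtain ⟨N, hN⟩ := exists_nat_gt (1 / ε)
    set m : ℕ := 2 * N + 3 with hmdef
    haveI : NeZero m := ⟨by omega⟩
    have hodd : Odd m := ⟨N + 1, by omega⟩
    have hm2 : 2 ≤ m := by omega
    refine ⟨{w : List A | diffC a b m w = 0}, ?_, ?_, 1 / m, ?_, ?_⟩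
    · refine ⟨ZMod m, inferInstance, diffDFA a m, fun w => ?_⟩
      have heval : (diffDFA a m).eval w = diffC a b m w := by
        show (diffDFA a m).evalFrom (diffDFA a m).start w = _
        rw [diffDFA_evalFrom a b hab hall m w _]
        show (0 : ZMod m) + _ = _
        rw [zero_add]
      have hacc : w ∈ (diffDFA a m).accepts ↔ diffC a b m w = 0 := by
        rw [DFA.mem_accepts, heval]
        exact Set.mem_singleton_iff
      exact hacc
    · intro w hw
      simp only [Set.mem_setOf_eq] at hw ⊢
      simp [diffC, hw]
    · unfold HasCesaroDensity
      have h2 : (Fintype.card A : ℝ) = 2 := by rw [hcard]; norm_num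
      have hc := (tendsto_density a b hab hall m hodd hm2).cesaro
      apply Tendsto.congr _ hc
      intro n
      simp only [h2]
      rw [div_eq_inv_mul]
    · have hmR : (0 : ℝ) < m := by positivity
      have h1 : (1 : ℝ) / ε < m := lt_of_lt_of_le hN (by exact_mod_cast (by omega : N ≤ m))
      rw [div_lt_iff₀ hε] at h1
      rw [div_le_iff₀ hmR]
      nlinarith
end

section
/- The set of palindromes P_A = {w ∈ A* : w = reverse(w)} over an alphabet A with |A| ≥ 2 is REG-measurable with measure 0: the infimum of densities of regular supersets of P_A is 0 (and the supremum of densities of regular subsets is 0). -/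
open Filter Topology

/-! ### Auxiliary counting lemmas -/

lemma PalAux.card_len (A : Type*) [Fintype A] (n : ℕ) :
    Nat.card {w : List A // w.length = n} = Fintype.card A ^ n := by
  have : Nat.card (List.Vector A n) = Fintype.card A ^ n := by
    rw [Nat.card_eq_fintype_card, card_vector]
  exact this

instance PalAux.finWC {A : Type*} [Fintype A] (L : Set (List A)) (n : ℕ) :
    Finite {w : List A // w ∈ L ∧ w.length = n} := by
  have : Finite {w : List A // w.length = n} := (List.finite_length_eq A n).to_subtype
  exact Finite.of_injective (fun w => (⟨w.1, w.2.2⟩ : {w : List A // w.length = n}))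
    (fun a b h => by simpa [Subtype.ext_iff] using h)

lemma PalAux.wordCount_le_pow {A : Type*} [Fintype A] (K : Set (List A))
    (hK : K ⊆ {w : List A | w = w.reverse}) (n : ℕ) :
    wordCount K n ≤ Fintype.card A ^ ((n+1)/2) := by
  rw [← PalAux.card_len A ((n+1)/2)]
  have : Finite {w : List A // w.length = (n+1)/2} :=
    (List.finite_length_eq A _).to_subtype
  apply Nat.card_le_card_of_injective
    (fun w => (⟨w.1.take ((n+1)/2), by
      rw [List.length_take, w.2.2]; omega⟩ : {w : List A // w.length = (n+1)/2}))
  rintro ⟨w₁, hw₁, h₁⟩ ⟨w₂, hw₂, h₂⟩ h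
  simp only [Subtype.mk.injEq] at h ⊢
  have key : ∀ w : List A, w ∈ K → w.length = n →
      w = (w.take ((n+1)/2)).take (n - (n+1)/2) ++ (w.take ((n+1)/2)).reverse := by
    intro w hw hl
    have hp : w = w.reverse := hK hw
    have hd : w.drop (n - (n+1)/2) = (w.take ((n+1)/2)).reverse := by
      have := List.reverse_take (l := w) (i := (n+1)/2)
      rw [hl] at this
      rw [this, ← hp]
    calc w = w.take (n - (n+1)/2) ++ w.drop (n - (n+1)/2) := (List.take_append_drop _ _).symm
    _ = (w.take ((n+1)/2)).take (n - (n+1)/2) ++ (w.take ((n+1)/2)).reverse := by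
        rw [List.take_take, hd, min_eq_left (by omega)]
  rw [key w₁ hw₁ h₁, key w₂ hw₂ h₂, h]

/-! ### The DFA recognizing `{w | w.take k = w.reverse.take k}` -/

namespace PalAux
variable {A : Type*} (k : ℕ)

def St (A : Type*) (k : ℕ) : Type _ :=
  {l : List A // l.length ≤ k} × {l : List A // l.length ≤ k}

instance [Finite A] : Finite (St A k) := by
  have : Finite {l : List A // l.length ≤ k} := (List.finite_length_le A k).to_subtype
  unfold St
  infer_instance

def stepP (p : {l : List A // l.length ≤ k}) (a : A) : {l : List A // l.length ≤ k} :=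
  if h : p.1.length < k then ⟨p.1 ++ [a], by simp; omega⟩ else p

def stepS (s : {l : List A // l.length ≤ k}) (a : A) : {l : List A // l.length ≤ k} :=
  ⟨(a :: s.1).take k, by simp⟩

def palDFA : DFA A (St A k) where
  step := fun x a => (stepP k x.1 a, stepS k x.2 a)
  start := (⟨[], by simp⟩, ⟨[], by simp⟩)
  accept := {x | x.1.1 = x.2.1}

lemma stepP_val (p : {l : List A // l.length ≤ k}) (a : A) :
    (stepP k p a).1 = if p.1.length < k then p.1 ++ [a] else p.1 := by
  unfold stepP; split_ifs <;> rfl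

lemma palDFA_eval (w : List A) :
    (palDFA k).eval w = (⟨w.take k, by simp⟩, ⟨w.reverse.take k, by simp⟩) := by
  induction w using List.reverseRecOn with
  | nil =>
    refine Prod.ext (Subtype.ext ?_) (Subtype.ext ?_) <;>
      simp [palDFA, DFA.eval, DFA.evalFrom] <;> rfl
  | append_singleton w a ih =>
    rw [DFA.eval, DFA.evalFrom_append_singleton, ← DFA.eval, ih]
    show (stepP k _ a, stepS k _ a) = _
    refine Prod.ext (Subtype.ext ?_) (Subtype.ext ?_)
    · rw [stepP_val]
      show (if (w.take k).length < k then w.take k ++ [a] else w.take k) = (w ++ [a]).take k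
      rw [List.length_take]
      by_cases hw : w.length < k
      · rw [if_pos (by omega), List.take_of_length_le (by omega),
          List.take_of_length_le (by simp; omega)]
      · rw [if_neg (by omega), List.take_append_of_le_length (by omega)]
    · show ((a :: w.reverse.take k).take k) = (w ++ [a]).reverse.take k
      rw [List.reverse_append, List.reverse_singleton, List.singleton_append]
      cases k with
      | zero => simp
      | succ j => rw [List.take_succ_cons, List.take_succ_cons, List.take_take,
          min_eq_left (by omega)]

lemma palDFA_accepts (w : List A) :
    w ∈ (palDFA k).accepts ↔ w.take k = w.reverse.take k := by
  rw [DFA.mem_accepts, palDFA_eval]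
  exact Iff.rfl

lemma wordCount_Mk {A : Type*} [Fintype A] (k n : ℕ) (hn : 2 * k ≤ n) :
    wordCount {w : List A | w.take k = w.reverse.take k} n = Fintype.card A ^ (n - k) := by
  rw [← PalAux.card_len A (n - k)]
  apply Nat.card_congr
  refine
    { toFun := fun w => ⟨w.1.take (n - k), by rw [List.length_take, w.2.2]; omega⟩
      invFun := fun u => ⟨u.1 ++ (u.1.take k).reverse, ?_, ?_⟩
      left_inv := ?_
      right_inv := ?_ }
  · show (u.1 ++ (u.1.take k).reverse).take k = (u.1 ++ (u.1.take k).reverse).reverse.take k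
    have hlu : (u.1.take k).length = k := by rw [List.length_take, u.2]; omega
    rw [List.take_append_of_le_length (by rw [u.2]; omega),
      List.reverse_append, List.reverse_reverse,
      List.take_append_of_le_length (le_of_eq hlu.symm),
      List.take_of_length_le (le_of_eq hlu)]
  · rw [List.length_append, List.length_reverse, List.length_take, u.2]; omega
  · rintro ⟨w, hw, hl⟩
    apply Subtype.ext
    show w.take (n - k) ++ ((w.take (n - k)).take k).reverse = w
    rw [List.take_take, min_eq_left (by omega)]
    have hd : (w.take k).reverse = w.drop (n - k) := by
      have hw' : w.take k = w.reverse.take k := hw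
      rw [hw', List.reverse_take]
      simp [hl]
    rw [hd, List.take_append_drop]
  · rintro ⟨u, hu⟩
    apply Subtype.ext
    show (u ++ (u.take k).reverse).take (n - k) = u
    rw [List.take_append_of_le_length (by omega), List.take_of_length_le (by omega)]

/-! ### Analytic lemmas -/

lemma cesaro_of_natDensity {A : Type*} [Fintype A] (L : Set (List A)) (α : ℝ)
    (h : HasNatDensity L α) : HasCesaroDensity L α := by
  simpa only [inv_mul_eq_div, HasCesaroDensity] using h.cesaro

lemma tendsto_half : Tendsto (fun n : ℕ => n / 2) atTop atTop :=
  tendsto_atTop_atTop.mpr fun b => ⟨2 * b, fun n hn => by omega⟩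

lemma cesaro_nonneg {A : Type*} [Fintype A] {L : Set (List A)} {β : ℝ}
    (h : HasCesaroDensity L β) : 0 ≤ β := by
  refine ge_of_tendsto' h fun n => ?_
  positivity

lemma cesaro_empty {A : Type*} [Fintype A] :
    HasCesaroDensity (∅ : Set (List A)) 0 := by
  apply cesaro_of_natDensity
  have hz : ∀ n, wordCount (∅ : Set (List A)) n = 0 := by
    intro n
    have : IsEmpty {w : List A // w ∈ (∅ : Set (List A)) ∧ w.length = n} :=
      ⟨fun w => w.2.1⟩
    exact Nat.card_of_isEmpty
  unfold HasNatDensity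
  simpa [hz] using tendsto_const_nhds

lemma regular_of_finite {A σ : Type*} [Finite σ] (M : DFA A σ) (L : Set (List A))
    (hM : ∀ w, w ∈ M.accepts ↔ w ∈ L) : IsRegularLang L := by
  obtain ⟨n, e⟩ : ∃ n, Nonempty (σ ≃ Fin n) := by
    obtain ⟨n, ⟨e⟩⟩ := Finite.exists_equiv_fin σ
    exact ⟨n, ⟨e⟩⟩
  obtain ⟨e⟩ := e
  refine ⟨Fin n, inferInstance,
    ⟨fun s a => e (M.step (e.symm s) a), e M.start, {s | e.symm s ∈ M.accept}⟩,
    fun w => ?_⟩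
  rw [← hM w]
  have key : ∀ (w : List A) (s : σ),
      DFA.evalFrom ⟨fun s a => e (M.step (e.symm s) a), e M.start,
        {s | e.symm s ∈ M.accept}⟩ (e s) w = e (M.evalFrom s w) := by
    intro w
    induction w with
    | nil => intro s; rfl
    | cons a t ih =>
      intro s
      show DFA.evalFrom _ (e (M.step (e.symm (e s)) a)) t = _
      rw [e.symm_apply_apply]
      exact ih (M.step s a)
  rw [DFA.mem_accepts, DFA.mem_accepts, DFA.eval, DFA.eval]
  show DFA.evalFrom _ (e M.start) w ∈ _ ↔ _
  rw [key w M.start]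
  simp

lemma regular_empty {A : Type*} : IsRegularLang (∅ : Set (List A)) := by
  refine ⟨Unit, inferInstance, ⟨fun _ _ => (), (), ∅⟩, fun w => ?_⟩
  simp [DFA.mem_accepts]

lemma subset_pal_cesaro_zero {A : Type*} [Fintype A] (hA : 2 ≤ Fintype.card A)
    {K : Set (List A)} (hK : K ⊆ {w : List A | w = w.reverse}) {α : ℝ}
    (h : HasCesaroDensity K α) : α = 0 := by
  set q : ℝ := (Fintype.card A : ℝ) with hq
  have hq2 : (2 : ℝ) ≤ q := by rw [hq]; exact_mod_cast hA
  have hq0 : 0 < q := by linarith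
  have hnat : HasNatDensity K 0 := by
    apply squeeze_zero (g := fun n : ℕ => (q⁻¹) ^ (n / 2))
    · intro n; positivity
    · intro n
      have hb := PalAux.wordCount_le_pow K hK n
      have hb' : (wordCount K n : ℝ) ≤ q ^ ((n+1)/2) := by
        rw [hq]; exact_mod_cast hb
      rw [div_le_iff₀ (by positivity)]
      calc (wordCount K n : ℝ) ≤ q ^ ((n+1)/2) := hb'
      _ = (q⁻¹) ^ (n / 2) * q ^ n := by
          rw [inv_pow, inv_mul_eq_div, eq_div_iff (by positivity), ← pow_add]
          congr 1
          omega
    · exact (tendsto_pow_atTop_nhds_zero_of_lt_one (by positivity)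
        (by rw [inv_lt_one₀ hq0]; linarith)).comp tendsto_half
  exact tendsto_nhds_unique h (cesaro_of_natDensity K 0 hnat)

lemma cesaro_Mk {A : Type*} [Fintype A] (hA : 2 ≤ Fintype.card A) (k : ℕ) :
    HasCesaroDensity {w : List A | w.take k = w.reverse.take k}
      (((Fintype.card A : ℝ))⁻¹ ^ k) := by
  set q : ℝ := (Fintype.card A : ℝ) with hq
  have hq0 : 0 < q := by
    rw [hq]; exact_mod_cast (by omega : 0 < Fintype.card A)
  apply cesaro_of_natDensity
  apply Tendsto.congr' (f₁ := fun _ : ℕ => q⁻¹ ^ k)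
  · filter_upwards [eventually_ge_atTop (2 * k)] with n hn
    rw [wordCount_Mk k n hn]
    push_cast
    rw [← hq, inv_pow, inv_eq_one_div, div_eq_div_iff (by positivity) (by positivity),
      one_mul, ← pow_add]
    congr 1
    omega
  · exact tendsto_const_nhds

end PalAux

/-- The set of palindromes is `REG`-measurable with measure `0`: the infimum
of densities of regular supersets is `0`, and the supremum of densities of
regular subsets is `0`. -/
theorem stmt12 {A : Type*} [Fintype A] (hA : 2 ≤ Fintype.card A) :
    IsGLB {β : ℝ | ∃ M : Set (List A), IsRegularLang M ∧
        {w : List A | w = w.reverse} ⊆ M ∧ HasCesaroDensity M β} 0 ∧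
    IsLUB {α : ℝ | ∃ K : Set (List A), IsRegularLang K ∧
        K ⊆ {w : List A | w = w.reverse} ∧ HasCesaroDensity K α} 0 := by
  have hq0 : 0 < (Fintype.card A : ℝ) := by exact_mod_cast (by omega : 0 < Fintype.card A)
  have hFin : Finite A := Finite.of_fintype A
  constructor
  · constructor
    · rintro β ⟨M, _, _, hd⟩
      exact PalAux.cesaro_nonneg hd
    · intro b hb
      have hmem : ∀ k : ℕ, ((Fintype.card A : ℝ))⁻¹ ^ k ∈
          {β : ℝ | ∃ M : Set (List A), IsRegularLang M ∧
            {w : List A | w = w.reverse} ⊆ M ∧ HasCesaroDensity M β} := by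
        intro k
        refine ⟨{w : List A | w.take k = w.reverse.take k},
          PalAux.regular_of_finite (PalAux.palDFA k) _
            (fun w => PalAux.palDFA_accepts k w), ?_, PalAux.cesaro_Mk hA k⟩
        intro w hw
        show w.take k = w.reverse.take k
        rw [← hw]
      have hlim : Tendsto (fun k : ℕ => ((Fintype.card A : ℝ))⁻¹ ^ k) atTop (nhds 0) := by
        apply tendsto_pow_atTop_nhds_zero_of_lt_one (by positivity)
        rw [inv_lt_one₀ hq0]
        exact_mod_cast by omega
      exact ge_of_tendsto' hlim fun k => hb (hmem k)
  · constructor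
    · rintro α ⟨K, _, hsub, hd⟩
      rw [PalAux.subset_pal_cesaro_zero hA hsub hd]
    · intro b hb
      exact hb ⟨∅, PalAux.regular_empty, Set.empty_subset _, PalAux.cesaro_empty⟩
end

section
/- For the Goldstine language G, the set of all forbidden prefixes L_G = {u ∈ A* : uA*{b} ∩ (A* \ G) = ∅} satisfies |L_G ∩ A^n| = 2^n − 1 for every n ≥ 1; equivalently, the complement of L_G consists exactly of the prefixes of the infinite word a b aa b aaa b ⋯. -/
open Filter Topology

/-- The Goldstine language `{a^{n₁} b ⋯ a^{n_p} b : p ≥ 1, ∃ i, n_i ≠ i}`. -/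
def goldstine {A : Type*} (a b : A) : Set (List A) :=
  {w | ∃ l : List ℕ, l ≠ [] ∧
    w = (l.map fun n => List.replicate n a ++ [b]).flatten ∧
    ∃ i : Fin l.length, l.get i ≠ (i : ℕ) + 1}

/-- The set of forbidden prefixes of the complement of the Goldstine language:
`u` such that every word `u v b` lies in `G`. -/
def goldstinePrefixes {A : Type*} (a b : A) : Set (List A) :=
  {u | ∀ v : List A, u ++ v ++ [b] ∈ goldstine a b}

namespace Stmt13Aux

variable {A : Type*}

/-- One block `a^n b`. -/
def blk (a b : A) (n : ℕ) : List A := List.replicate n a ++ [b]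

/-- Concatenation of blocks. -/
def Fg (a b : A) (l : List ℕ) : List A := (l.map fun n => List.replicate n a ++ [b]).flatten

/-- Prefix word `ab aab ⋯ a^N b`. -/
def W (a b : A) (N : ℕ) : List A := Fg a b ((List.range N).map (· + 1))

lemma Fg_nil (a b : A) : Fg a b [] = [] := rfl

lemma Fg_cons (a b : A) (n : ℕ) (l : List ℕ) :
    Fg a b (n :: l) = List.replicate n a ++ b :: Fg a b l := by
  simp [Fg]

lemma Fg_append (a b : A) (l l' : List ℕ) :
    Fg a b (l ++ l') = Fg a b l ++ Fg a b l' := by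
  simp [Fg]

lemma mem_pair (a b : A) [Fintype A] (hab : a ≠ b) (hcard : Fintype.card A = 2)
    (c : A) : c = a ∨ c = b := by
  classical
  have h : (insert a {b} : Finset A) = Finset.univ := by
    apply Finset.eq_univ_of_card
    rw [Finset.card_insert_of_notMem (by simpa using hab), Finset.card_singleton, hcard]
  have hc := Finset.mem_univ c
  rw [← h] at hc
  simpa using hc

lemma blk_inj (a b : A) (hab : a ≠ b) :
    ∀ (n : ℕ) {m : ℕ} {s t : List A},
      List.replicate n a ++ b :: s = List.replicate m a ++ b :: t → n = m ∧ s = t := by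
  intro n
  induction n with
  | zero =>
    intro m s t h
    cases m with
    | zero => simpa using h
    | succ m =>
      rw [List.replicate_succ] at h
      simp only [List.replicate_zero, List.nil_append, List.cons_append, List.cons.injEq] at h
      exact absurd h.1 hab.symm
  | succ n ih =>
    intro m s t h
    cases m with
    | zero =>
      rw [List.replicate_succ] at h
      simp only [List.replicate_zero, List.nil_append, List.cons_append, List.cons.injEq] at h
      exact absurd h.1 hab
    | succ m =>
      rw [List.replicate_succ, List.replicate_succ] at h
      simp only [List.cons_append, List.cons.injEq] at h
      obtain ⟨h1, h2⟩ := ih h.2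
      exact ⟨by omega, h2⟩

lemma Fg_inj (a b : A) (hab : a ≠ b) :
    ∀ (l : List ℕ) {l' : List ℕ}, Fg a b l = Fg a b l' → l = l' := by
  intro l
  induction l with
  | nil =>
    intro l' h
    cases l' with
    | nil => rfl
    | cons n l' =>
      rw [Fg_nil, Fg_cons] at h
      exact absurd h.symm (by simp)
  | cons n l ih =>
    intro l' h
    cases l' with
    | nil =>
      rw [Fg_nil, Fg_cons] at h
      exact absurd h (by simp)
    | cons m l' =>
      rw [Fg_cons, Fg_cons] at h
      obtain ⟨h1, h2⟩ := blk_inj a b hab n h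
      rw [h1, ih h2]

lemma decomp (a b : A) [Fintype A] (hab : a ≠ b) (hcard : Fintype.card A = 2)
    (u : List A) : ∃ l k, u = Fg a b l ++ List.replicate k a := by
  induction u using List.reverseRecOn with
  | nil => exact ⟨[], 0, rfl⟩
  | append_singleton u c ih =>
    obtain ⟨l, k, rfl⟩ := ih
    rcases mem_pair a b hab hcard c with rfl | rfl
    · exact ⟨l, k + 1, by rw [List.replicate_succ' (n := k), List.append_assoc]⟩
    · refine ⟨l ++ [k], 0, ?_⟩
      rw [Fg_append]
      simp [Fg]

lemma W_succ (a b : A) (N : ℕ) :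
    W a b (N + 1) = W a b N ++ (List.replicate (N + 1) a ++ [b]) := by
  rw [W, List.range_succ, List.map_append, Fg_append]
  simp [Fg, W]

lemma W_prefix (a b : A) {N M : ℕ} (h : N ≤ M) : W a b N <+: W a b M := by
  induction M, h using Nat.le_induction with
  | base => exact List.prefix_rfl
  | succ M hNM ih => exact ih.trans (by rw [W_succ]; exact List.prefix_append _ _)

lemma len_W (a b : A) (N : ℕ) : N ≤ (W a b N).length := by
  induction N with
  | zero => exact Nat.zero_le _
  | succ N ih =>
    rw [W_succ]
    simp only [List.length_append, List.length_replicate, List.length_singleton]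
    omega

lemma W_not_goldstine (a b : A) (hab : a ≠ b) (N : ℕ) : W a b N ∉ goldstine a b := by
  rintro ⟨l, hl, heq, i, hi⟩
  have heq' : Fg a b ((List.range N).map (· + 1)) = Fg a b l := heq
  have : (List.range N).map (· + 1) = l := Fg_inj a b hab _ heq'
  subst this
  apply hi
  simp

/-- The key equivalence. -/
lemma key (a b : A) [Fintype A] (hab : a ≠ b) (hcard : Fintype.card A = 2)
    (u : List A) : u ∉ goldstinePrefixes a b ↔ ∃ N, u <+: W a b N := by
  constructor
  · intro h
    by_contra hc
    push_neg at hc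
    apply h
    intro v
    obtain ⟨l, k, he⟩ := decomp a b hab hcard (u ++ v ++ [b])
    cases k with
    | succ k =>
      exfalso
      rw [List.replicate_succ' (n := k), ← List.append_assoc] at he
      have := congrArg List.getLast? he
      rw [List.getLast?_concat, List.getLast?_concat] at this
      exact hab (Option.some.injEq _ _ ▸ this.symm : a = b) |>.elim
    | zero =>
      rw [List.replicate_zero, List.append_nil] at he
      have hl : l ≠ [] := by
        rintro rfl
        rw [Fg_nil] at he
        exact absurd he (by simp)
      refine ⟨l, hl, he, ?_⟩
      by_contra hno
      push_neg at hno
      apply hc l.length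
      have hlw : l = (List.range l.length).map (· + 1) := by
        apply List.ext_get (by simp)
        intro i h1 h2
        have := hno ⟨i, h1⟩
        simpa using this
      have : u ++ v ++ [b] = W a b l.length := by
        rw [he]; conv_lhs => rw [hlw]
        rfl
      exact ⟨v ++ [b], by rw [← List.append_assoc, this]⟩
  · rintro ⟨N, s, hs⟩ hL
    have hw := hL (s ++ List.replicate (N + 1) a)
    apply W_not_goldstine a b hab (N + 1)
    rw [W_succ, ← hs]
    simpa [List.append_assoc] using hw

lemma unique_len (a b : A) {u : List A} {N n : ℕ} (hp : u <+: W a b N)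
    (hlen : u.length = n) : u = (W a b n).take n := by
  set M := max N n with hM
  have hp' : u <+: W a b M := hp.trans (W_prefix a b (le_max_left _ _))
  have h1 : u = (W a b M).take n := by
    rw [List.prefix_iff_eq_take] at hp'
    rw [hp', hlen]
  have h2 : (W a b n).take n = (W a b M).take n := by
    have hpn : (W a b n).take n <+: W a b M :=
      (List.take_prefix n _).trans (W_prefix a b (le_max_right _ _))
    rw [List.prefix_iff_eq_take] at hpn
    rw [hpn, List.length_take, min_eq_left (len_W a b n)]
  rw [h1, h2]

end Stmt13Aux

/-- `|L_G ∩ A^n| = 2^n - 1` for `n ≥ 1`; equivalently, the complement of `L_G`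
consists exactly of the prefixes of the infinite word `ab aab aaab ⋯`. -/
theorem stmt13 {A : Type*} [Fintype A] (a b : A) (hab : a ≠ b)
    (hcard : Fintype.card A = 2) :
    (∀ n : ℕ, 1 ≤ n → wordCount (goldstinePrefixes a b) n = 2 ^ n - 1) ∧
    (∀ u : List A, u ∉ goldstinePrefixes a b ↔
      ∃ N : ℕ, u <+: ((List.range N).map fun i => List.replicate (i + 1) a ++ [b]).flatten) := by
  have hW : ∀ N : ℕ,
      ((List.range N).map fun i => List.replicate (i + 1) a ++ [b]).flatten
        = Stmt13Aux.W a b N := by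
    intro N
    simp [Stmt13Aux.W, Stmt13Aux.Fg, List.map_map, Function.comp_def]
  constructor
  · intro n _
    classical
    set t : List A := (Stmt13Aux.W a b n).take n with ht
    have htlen : t.length = n := by
      rw [ht, List.length_take, min_eq_left (Stmt13Aux.len_W a b n)]
    have htnot : t ∉ goldstinePrefixes a b :=
      (Stmt13Aux.key a b hab hcard t).mpr ⟨n, List.take_prefix _ _⟩
    have hset : {w : List A | w ∈ goldstinePrefixes a b ∧ w.length = n}
        = {w : List A | w.length = n} \ {t} := by
      ext w
      simp only [Set.mem_setOf_eq, Set.mem_diff, Set.mem_singleton_iff]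
      constructor
      · rintro ⟨hwL, hwlen⟩
        exact ⟨hwlen, fun he => htnot (he ▸ hwL)⟩
      · rintro ⟨hwlen, hne⟩
        refine ⟨?_, hwlen⟩
        by_contra hwL
        obtain ⟨N, hp⟩ := (Stmt13Aux.key a b hab hcard w).mp hwL
        exact hne (Stmt13Aux.unique_len a b hp hwlen)
    have hwc : wordCount (goldstinePrefixes a b) n
        = ({w : List A | w ∈ goldstinePrefixes a b ∧ w.length = n}).ncard := rfl
    haveI hV : Finite {w : List A // w.length = n} :=
      Finite.of_equiv (List.Vector A n) (Equiv.refl (List.Vector A n))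
    haveI : Finite ↥{w : List A | w.length = n} := hV
    have hfin : ({w : List A | w.length = n} : Set (List A)).Finite := Set.toFinite _
    have hcardall : ({w : List A | w.length = n} : Set (List A)).ncard = 2 ^ n := by
      have h1 : Nat.card (List.Vector A n) = 2 ^ n := by
        rw [Nat.card_eq_fintype_card, card_vector, hcard]
      exact h1
    have hmem : t ∈ {w : List A | w.length = n} := htlen
    rw [hwc, hset, Set.ncard_diff_singleton_of_mem hmem, hcardall]
  · intro u
    rw [Stmt13Aux.key a b hab hcard u]
    exact exists_congr fun N => by rw [hW]
end

section
/- Every regular language L ⊆ A* with positive density (equivalently, non-null) contains infinitely many non-primitive words; consequently the REG-lower-density of the set Q_A of primitive words is 0. -/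
open Filter Topology

/-- A word is primitive if it is nonempty and not a power of any word other
than itself. -/
def Primitive {A : Type*} (w : List A) : Prop :=
  w ≠ [] ∧ ∀ (u : List A) (n : ℕ), w = (List.replicate n u).flatten → u = w

section Aux

variable {A : Type*} [Fintype A]

private def toVec {S : Set (List A)} {n : ℕ}
    (w : {w : List A // w ∈ S ∧ w.length = n}) : List.Vector A n := ⟨w.1, w.2.2⟩

private lemma toVec_inj {S : Set (List A)} {n : ℕ} :
    Function.Injective (toVec (S := S) (n := n)) := by
  intro a b h
  exact Subtype.ext (congrArg List.Vector.toList h)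

private instance wordFinite (S : Set (List A)) (n : ℕ) :
    Finite {w : List A // w ∈ S ∧ w.length = n} :=
  Finite.of_injective toVec toVec_inj

private lemma wordCount_le_pow (S : Set (List A)) (n : ℕ) :
    wordCount S n ≤ Fintype.card A ^ n := by
  have h := Nat.card_le_card_of_injective _ (toVec_inj (S := S) (n := n))
  rw [Nat.card_eq_fintype_card (α := List.Vector A n), card_vector] at h
  exact h

private lemma wordCount_mono {S T : Set (List A)} {n : ℕ}
    (h : ∀ w : List A, w.length = n → w ∈ S → w ∈ T) :
    wordCount S n ≤ wordCount T n := by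
  refine Nat.card_le_card_of_injective
    (fun w : {w : List A // w ∈ S ∧ w.length = n} =>
      (⟨w.1, h w.1 w.2.2 w.2.1, w.2.2⟩ : {w : List A // w ∈ T ∧ w.length = n})) ?_
  intro a b hh
  exact Subtype.ext (congrArg (Subtype.val (p := fun w : List A => w ∈ T ∧ w.length = n)) hh)

omit [Fintype A] in
private lemma len_flat (n : ℕ) (u : List A) :
    ((List.replicate n u).flatten).length = n * u.length := by
  induction n with
  | zero => simp
  | succ n ih => rw [List.replicate_succ, List.flatten_cons, List.length_append, ih]; ring

end Aux

section Key

variable {A : Type*} [Fintype A]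

private lemma key (hA : 2 ≤ Fintype.card A) (L : Set (List A)) (hreg : IsRegularLang L)
    {α : ℝ} (hces : HasCesaroDensity L α) (hα : 0 < α) :
    ∃ u : List A, u ≠ [] ∧ ∃ m : ℕ, 1 ≤ m ∧
      ∀ k : ℕ, (List.replicate (k * m + 1) u).flatten ∈ L := by
  classical
  obtain ⟨σ, hσ, M, hM⟩ := hreg
  have hQpos : (0:ℝ) < (Fintype.card A : ℝ) := by
    have : 0 < Fintype.card A := by omega
    exact_mod_cast this
  set f : List A → σ → σ := fun w q => M.evalFrom q w with hfdef
  have hcomp : ∀ x y : List A, f (x ++ y) = f y ∘ f x := by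
    intro x y; funext q; exact M.evalFrom_of_append q x y
  have hrange : ∀ x y : List A, Set.range (f (x ++ y)) = f y '' Set.range (f x) := by
    intro x y; rw [hcomp, Set.range_comp]
  have rank_left : ∀ x y : List A,
      (Set.range (f (x ++ y))).ncard ≤ (Set.range (f x)).ncard := by
    intro x y; rw [hrange]; exact Set.ncard_image_le (Set.toFinite _)
  have rank_right : ∀ x y : List A,
      (Set.range (f (x ++ y))).ncard ≤ (Set.range (f y)).ncard := by
    intro x y
    refine Set.ncard_le_ncard ?_ (Set.toFinite _)
    rw [hrange]
    rintro s ⟨t, -, rfl⟩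
    exact ⟨t, rfl⟩
  have hAne : Nonempty A := by
    rw [← Fintype.card_pos_iff]; omega
  obtain ⟨a⟩ := hAne
  set S : Set ℕ := {n | ∃ w : List A, w ≠ [] ∧ (Set.range (f w)).ncard = n} with hSdef
  have hSne : S.Nonempty := ⟨_, [a], by simp, rfl⟩
  set r : ℕ := sInf S with hrdef
  obtain ⟨v, hvne, hvrank⟩ : r ∈ S := Nat.sInf_mem hSne
  have hrle : ∀ w : List A, w ≠ [] → r ≤ (Set.range (f w)).ncard :=
    fun w hw => Nat.sInf_le ⟨w, hw, rfl⟩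
  have hℓ : 0 < v.length := List.length_pos_iff.mpr hvne
  set B : Set (List A) := {w | w ≠ [] ∧ (Set.range (f w)).ncard ≤ r} with hBdef
  have hBappend : ∀ w y : List A, w ∈ B → w ++ y ∈ B := by
    rintro w y ⟨hw1, hw2⟩
    exact ⟨by simp [hw1], le_trans (rank_left w y) hw2⟩
  have hBv : ∀ x : List A, x ++ v ∈ B := fun x =>
    ⟨by simp [hvne], le_trans (rank_right x v) (le_of_eq hvrank)⟩
  -- counting recursion
  have hcount : ∀ n : ℕ, wordCount Bᶜ (n + v.length) ≤
      wordCount Bᶜ n * (Fintype.card A ^ v.length - 1) := by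
    intro n
    have hT2 : Nat.card {y : List.Vector A v.length // y ≠ ⟨v, rfl⟩} =
        Fintype.card A ^ v.length - 1 := by
      rw [Nat.card_eq_fintype_card]
      have h1 := Fintype.card_subtype_compl (fun y : List.Vector A v.length => y = ⟨v, rfl⟩)
      simp only [Fintype.card_subtype_eq, card_vector] at h1
      convert h1 using 2
      exact (Fintype.card_eq_one_iff.mpr ⟨⟨_, rfl⟩, fun x => Subtype.ext x.2⟩).symm
    have key1 : Nat.card {w : List A // w ∈ Bᶜ ∧ w.length = n + v.length} ≤
        Nat.card ({w : List A // w ∈ Bᶜ ∧ w.length = n} ×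
          {y : List.Vector A v.length // y ≠ ⟨v, rfl⟩}) := by
      refine Nat.card_le_card_of_injective (fun w => (⟨⟨w.1.take n, ?_, ?_⟩, ⟨⟨w.1.drop n, ?_⟩, ?_⟩⟩)) ?_
      · intro htake
        apply w.2.1
        have h := hBappend _ (w.1.drop n) htake
        rwa [List.take_append_drop] at h
      · rw [List.length_take, w.2.2]; omega
      · rw [List.length_drop, w.2.2]; omega
      · intro hEq
        have hd : w.1.drop n = v := congrArg List.Vector.toList hEq
        apply w.2.1
        rw [← List.take_append_drop n (w.1 : List A), hd]
        exact hBv (w.1.take n)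
      · intro w1 w2 hEq
        have h1 : w1.1.take n = w2.1.take n :=
          congrArg Subtype.val (congrArg Prod.fst hEq)
        have h2 : w1.1.drop n = w2.1.drop n :=
          congrArg List.Vector.toList (congrArg Subtype.val (congrArg Prod.snd hEq))
        refine Subtype.ext ?_
        rw [← List.take_append_drop n w1.1, ← List.take_append_drop n w2.1, h1, h2]
    rw [Nat.card_prod, hT2] at key1
    exact key1
  have hiter : ∀ (k n₀ : ℕ), wordCount Bᶜ (n₀ + k * v.length) ≤
      Fintype.card A ^ n₀ * (Fintype.card A ^ v.length - 1) ^ k := by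
    intro k
    induction k with
    | zero => intro n₀; simpa using wordCount_le_pow Bᶜ n₀
    | succ k ih =>
      intro n₀
      have heq : n₀ + (k + 1) * v.length = (n₀ + k * v.length) + v.length := by ring
      rw [heq]
      calc wordCount Bᶜ ((n₀ + k * v.length) + v.length)
          ≤ wordCount Bᶜ (n₀ + k * v.length) * (Fintype.card A ^ v.length - 1) := hcount _
        _ ≤ (Fintype.card A ^ n₀ * (Fintype.card A ^ v.length - 1) ^ k) *
            (Fintype.card A ^ v.length - 1) := Nat.mul_le_mul_right _ (ih n₀)
        _ = Fintype.card A ^ n₀ * (Fintype.card A ^ v.length - 1) ^ (k + 1) := by ring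
  -- frequently large wordCount
  have hub : ∀ n : ℕ, (wordCount L n : ℝ) / (Fintype.card A : ℝ) ^ n ≤ 1 := by
    intro n
    rw [div_le_one (by positivity)]
    exact_mod_cast wordCount_le_pow L n
  have hnonneg : ∀ n : ℕ, 0 ≤ (wordCount L n : ℝ) / (Fintype.card A : ℝ) ^ n := by
    intro n; positivity
  have hfreq : ∃ᶠ n in atTop,
      α / 2 ≤ (wordCount L n : ℝ) / (Fintype.card A : ℝ) ^ n := by
    by_contra hcon
    rw [Filter.not_frequently] at hcon
    simp only [not_le] at hcon
    obtain ⟨K₀, hK₀⟩ := eventually_atTop.mp hcon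
    have hle : ∀ᶠ n in atTop,
        (∑ k ∈ Finset.range n, (wordCount L k : ℝ) / (Fintype.card A : ℝ) ^ k) / n
          ≤ (K₀ : ℝ) / n + α / 2 := by
      filter_upwards [eventually_ge_atTop (K₀ + 1)] with n hn
      have hn0 : (0:ℝ) < n := by
        have : 0 < n := by omega
        exact_mod_cast this
      have hsum : (∑ k ∈ Finset.range n, (wordCount L k : ℝ) / (Fintype.card A : ℝ) ^ k)
          ≤ (K₀ : ℝ) + n * (α / 2) := by
        rw [Finset.range_eq_Ico,
          ← Finset.sum_Ico_consecutive _ (Nat.zero_le K₀) (by omega : K₀ ≤ n)]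
        have h1 : ∑ k ∈ Finset.Ico 0 K₀, (wordCount L k : ℝ) / (Fintype.card A : ℝ) ^ k
            ≤ (K₀ : ℝ) := by
          calc _ ≤ ∑ _k ∈ Finset.Ico 0 K₀, (1:ℝ) :=
                Finset.sum_le_sum (fun k _ => hub k)
            _ = (K₀ : ℝ) := by simp
        have h2 : ∑ k ∈ Finset.Ico K₀ n, (wordCount L k : ℝ) / (Fintype.card A : ℝ) ^ k
            ≤ (n : ℝ) * (α / 2) := by
          calc _ ≤ ∑ _k ∈ Finset.Ico K₀ n, (α / 2) :=
                Finset.sum_le_sum (fun k hk => le_of_lt (hK₀ k (Finset.mem_Ico.mp hk).1))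
            _ = ((n - K₀ : ℕ) : ℝ) * (α / 2) := by rw [Finset.sum_const, Nat.card_Ico]; simp
            _ ≤ (n : ℝ) * (α / 2) := by
                have : ((n - K₀ : ℕ) : ℝ) ≤ (n : ℝ) := by
                  exact_mod_cast Nat.sub_le n K₀
                nlinarith
        linarith
      calc (∑ k ∈ Finset.range n, (wordCount L k : ℝ) / (Fintype.card A : ℝ) ^ k) / n
          ≤ ((K₀ : ℝ) + n * (α / 2)) / n := by gcongr
        _ = (K₀ : ℝ) / n + α / 2 := by field_simp
    have hlim : Tendsto (fun n : ℕ => (K₀ : ℝ) / n + α / 2) atTop (nhds (0 + α / 2)) :=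
      (tendsto_const_div_atTop_nhds_zero_nat _).add tendsto_const_nhds
    have hfin := le_of_tendsto_of_tendsto hces hlim hle
    linarith
  -- choose n
  set Q : ℝ := (Fintype.card A : ℝ) with hQdef
  have hQl : (0:ℝ) < Q ^ v.length := by positivity
  have hQ1 : (1:ℝ) ≤ Q := by
    have h : (1:ℕ) ≤ Fintype.card A := by omega
    rw [hQdef]
    exact_mod_cast h
  have hQl1 : (1:ℝ) ≤ Q ^ v.length := by
    calc (1:ℝ) = 1 ^ v.length := (one_pow _).symm
      _ ≤ Q ^ v.length := pow_le_pow_left₀ (by norm_num) hQ1 _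
  have hγ0 : 0 ≤ (Q ^ v.length - 1) / Q ^ v.length := by
    apply div_nonneg _ (le_of_lt hQl); linarith
  have hγ1 : (Q ^ v.length - 1) / Q ^ v.length < 1 := by
    rw [div_lt_one hQl]; linarith
  have htends := tendsto_pow_atTop_nhds_zero_of_lt_one hγ0 hγ1
  have hev : ∀ᶠ k : ℕ in atTop, ((Q ^ v.length - 1) / Q ^ v.length) ^ k < α / 2 :=
    htends.eventually_lt_const (by linarith)
  obtain ⟨K, hK⟩ := eventually_atTop.mp hev
  obtain ⟨n, hn1, hn2⟩ := (hfreq.and_eventually (eventually_ge_atTop (v.length * (K + 1)))).exists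
  have hkK : K ≤ n / v.length := by
    rw [Nat.le_div_iff_mul_le hℓ]
    calc K * v.length ≤ (K + 1) * v.length := Nat.mul_le_mul_right v.length (by omega)
      _ = v.length * (K + 1) := by ring
      _ ≤ n := hn2
  have hnpos : 1 ≤ n := le_trans (Nat.mul_le_mul hℓ (Nat.succ_le_succ (Nat.zero_le K))) hn2
  have hdecomp : n % v.length + (n / v.length) * v.length = n := Nat.mod_add_div' n v.length
  -- real bound on wordCount Bᶜ n
  have hcast1 : ((Fintype.card A ^ v.length - 1 : ℕ) : ℝ) = Q ^ v.length - 1 := by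
    have h1 : (1:ℕ) ≤ Fintype.card A ^ v.length := Nat.one_le_pow _ _ (by omega)
    push_cast [Nat.cast_sub h1]
    ring
  have hNn : (wordCount Bᶜ n : ℝ) ≤ Q ^ (n % v.length) * (Q ^ v.length - 1) ^ (n / v.length) := by
    have h := hiter (n / v.length) (n % v.length)
    rw [hdecomp] at h
    calc (wordCount Bᶜ n : ℝ)
        ≤ ((Fintype.card A ^ (n % v.length) * (Fintype.card A ^ v.length - 1) ^ (n / v.length) : ℕ) : ℝ) := by
          exact_mod_cast h
      _ = Q ^ (n % v.length) * (Q ^ v.length - 1) ^ (n / v.length) := by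
          push_cast [hcast1]; ring
  have hγk : (Q ^ v.length - 1) ^ (n / v.length) < (α / 2) * (Q ^ v.length) ^ (n / v.length) := by
    have h := hK (n / v.length) hkK
    rw [div_pow, div_lt_iff₀ (by positivity)] at h
    linarith [h]
  have hQn : Q ^ n = Q ^ (n % v.length) * (Q ^ v.length) ^ (n / v.length) := by
    rw [← pow_mul, ← pow_add, Nat.mod_add_div]
  have chain : (wordCount Bᶜ n : ℝ) < (α / 2) * Q ^ n := by
    calc (wordCount Bᶜ n : ℝ)
        ≤ Q ^ (n % v.length) * (Q ^ v.length - 1) ^ (n / v.length) := hNn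
      _ < Q ^ (n % v.length) * ((α / 2) * (Q ^ v.length) ^ (n / v.length)) := by
          apply mul_lt_mul_of_pos_left hγk (by positivity)
      _ = (α / 2) * Q ^ n := by rw [hQn]; ring
  have hwc : (α / 2) * Q ^ n ≤ (wordCount L n : ℝ) := by
    have := hn1
    rw [le_div_iff₀ (by positivity)] at this
    linarith [this]
  have hlt : wordCount Bᶜ n < wordCount L n := by
    have : (wordCount Bᶜ n : ℝ) < (wordCount L n : ℝ) := lt_of_lt_of_le chain hwc
    exact_mod_cast this
  -- extract u
  have hex : ¬ (∀ w : List A, w.length = n → w ∈ L → w ∈ Bᶜ) := by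
    intro h
    exact absurd (wordCount_mono h) (by omega)
  push_neg at hex
  obtain ⟨u, hulen, huL, huB⟩ := hex
  have huB' : u ∈ B := by
    by_contra h
    exact huB h
  obtain ⟨hune, hurank⟩ := huB'
  -- permutation argument
  set g : σ → σ := f u with hgdef
  set R : Set σ := Set.range g with hRdef
  have huu : (Set.range (f (u ++ u))).ncard = (g '' R).ncard := by rw [hrange]
  have hRcard : R.ncard ≤ (g '' R).ncard := by
    rw [← huu]
    calc R.ncard ≤ r := hurank
      _ ≤ (Set.range (f (u ++ u))).ncard := hrle _ (by simp [hune])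
  have himg : g '' R = R :=
    Set.eq_of_subset_of_ncard_le (Set.image_subset_range g R) hRcard (Set.toFinite R)
  haveI : Finite ↥R := (Set.toFinite R).to_subtype
  have hgel : ∀ x : ↥R, g x.1 ∈ R := fun x => Set.mem_range_self x.1
  set e : ↥R → ↥R := fun x => ⟨g x.1, hgel x⟩ with hedef
  have hsurj : Function.Surjective e := by
    rintro ⟨y, hy⟩
    rw [← himg] at hy
    obtain ⟨x, hx, rfl⟩ := hy
    exact ⟨⟨x, hx⟩, rfl⟩
  have hinj : Function.Injective e := Finite.injective_iff_surjective.mpr hsurj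
  set π : Equiv.Perm ↥R := Equiv.ofBijective e ⟨hinj, hsurj⟩ with hπdef
  set m : ℕ := orderOf π with hmdef
  have hm : 0 < m := orderOf_pos π
  have hπm : π ^ m = 1 := pow_orderOf_eq_one π
  have hiterπ : ∀ (j : ℕ) (x : ↥R), ((π ^ j) x : σ) = g^[j] x.1 := by
    intro j
    induction j with
    | zero => intro x; simp
    | succ j ih =>
      intro x
      rw [pow_succ]
      have h1 : ((π ^ j * π) x : σ) = ((π ^ j) (π x) : σ) := rfl
      rw [h1, ih (π x)]
      have h2 : ((π x : ↥R) : σ) = g x.1 := rfl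
      rw [h2, Function.iterate_succ_apply]
  have hfix : ∀ x ∈ R, g^[m] x = x := by
    intro x hx
    have h := hiterπ m ⟨x, hx⟩
    rw [hπm] at h
    simpa using h.symm
  have hfixk : ∀ (k : ℕ), ∀ x ∈ R, g^[k * m] x = x := by
    intro k
    induction k with
    | zero => intro x _; simp
    | succ k ih =>
      intro x hx
      have heq : (k + 1) * m = m + k * m := by ring
      rw [heq, Function.iterate_add_apply, ih x hx, hfix x hx]
  have hflat : ∀ (j : ℕ) (q : σ), M.evalFrom q ((List.replicate j u).flatten) = g^[j] q := by
    intro j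
    induction j with
    | zero => intro q; simp
    | succ j ih =>
      intro q
      rw [List.replicate_succ, List.flatten_cons, DFA.evalFrom_of_append, ih,
        Function.iterate_succ_apply]
  refine ⟨u, hune, m, hm, fun k => ?_⟩
  rw [← hM, DFA.mem_accepts]
  show M.evalFrom M.start ((List.replicate (k * m + 1) u).flatten) ∈ M.accept
  rw [hflat, Function.iterate_succ_apply, hfixk k (g M.start) (Set.mem_range_self _)]
  exact (M.mem_accepts).mp ((hM u).mpr huL)

end Key

/-- Every regular language of positive (Cesàro) density contains infinitely
many non-primitive words; consequently the `REG`-lower-density of the set of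
primitive words is `0`. -/
theorem stmt19 {A : Type*} [Fintype A] (hA : 2 ≤ Fintype.card A) :
    (∀ L : Set (List A), IsRegularLang L →
      (∃ α : ℝ, HasCesaroDensity L α ∧ 0 < α) →
      {w : List A | w ∈ L ∧ ¬ Primitive w}.Infinite) ∧
    IsLUB {x : ℝ | ∃ K : Set (List A), IsRegularLang K ∧
        K ⊆ {w : List A | Primitive w} ∧ HasCesaroDensity K x} 0 := by
  have part1 : ∀ L : Set (List A), IsRegularLang L →
      (∃ α : ℝ, HasCesaroDensity L α ∧ 0 < α) →
      {w : List A | w ∈ L ∧ ¬ Primitive w}.Infinite := by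
    rintro L hreg ⟨α, hces, hα⟩
    obtain ⟨u, hune, m, hm, hpow⟩ := key hA L hreg hces hα
    have hulen : 0 < u.length := List.length_pos_iff.mpr hune
    refine Set.infinite_of_injective_forall_mem
      (f := fun k : ℕ => (List.replicate ((k + 1) * m + 1) u).flatten) ?_ ?_
    · intro k1 k2 h
      have hl := congrArg List.length h
      rw [len_flat, len_flat] at hl
      have h1 := Nat.eq_of_mul_eq_mul_right hulen hl
      have h2 : (k1 + 1) * m = (k2 + 1) * m := by omega
      have h3 := Nat.eq_of_mul_eq_mul_right hm h2
      omega
    · intro k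
      refine ⟨hpow (k + 1), ?_⟩
      intro hP
      have hEq := hP.2 u ((k + 1) * m + 1) rfl
      have hlen := congrArg List.length hEq
      rw [len_flat] at hlen
      have ht : 0 < (k + 1) * m := Nat.mul_pos (Nat.succ_pos k) hm
      nlinarith [hlen, hulen, ht]
  refine ⟨part1, ?_, ?_⟩
  · rintro x ⟨K, hKreg, hKsub, hKd⟩
    by_contra hx
    push_neg at hx
    have hinf := part1 K hKreg ⟨x, hKd, hx⟩
    have hemp : {w : List A | w ∈ K ∧ ¬ Primitive w} = ∅ := by
      ext w
      simp only [Set.mem_setOf_eq, Set.mem_empty_iff_false, iff_false, not_and, not_not]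
      exact fun hw => hKsub hw
    rw [hemp] at hinf
    exact hinf Set.finite_empty
  · intro b hb
    apply hb
    refine ⟨∅, ?_, by simp, ?_⟩
    · exact ⟨Unit, inferInstance, ⟨fun _ _ => (), (), ∅⟩, fun w => by
        simp [DFA.mem_accepts]⟩
    · have h0 : ∀ k : ℕ, wordCount (∅ : Set (List A)) k = 0 := by
        intro k
        haveI : IsEmpty {w : List A // w ∈ (∅ : Set (List A)) ∧ w.length = k} :=
          ⟨fun w => w.2.1⟩
        exact Nat.card_of_isEmpty
      have : (fun n : ℕ =>
          (∑ k ∈ Finset.range n, (wordCount (∅ : Set (List A)) k : ℝ) /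
            (Fintype.card A : ℝ) ^ k) / n) = fun _ => (0:ℝ) := by
        funext n
        simp [h0]
      unfold HasCesaroDensity
      rw [this]
      exact tendsto_const_nhds
end
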